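/- (Whitney-type counterexample) There exists a differentiable, strictly increasing function $f:\mathbb{R}\to\mathbb{R}$ whose derivative vanishes on a set of positive Lebesgue measure. Consequently, strict monotonicity of a differentiable function does not imply that its derivative is positive Lebesgue-almost everywhere. -/

import Mathlib

open MeasureTheory Metric ENNReal

noncomputable def myQ : ℕ → ℝ := fun n => ((Denumerable.eqv ℚ).symm n : ℚ)

noncomputable def myU : Set ℝ := ⋃ n : ℕ, ball (myQ n) ((1/8) * (1/2)^n)

noncomputable def myK : Set ℝ := Set.Icc 0 1 \ myU

lemma isOpen_myU : IsOpen myU := isOpen_iUnion fun _ => isOpen_ball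

lemma isClosed_myK : IsClosed myK := isClosed_Icc.sdiff isOpen_myU

lemma rat_mem_myU (q : ℚ) : (q : ℝ) ∈ myU := by
  refine Set.mem_iUnion.2 ⟨(Denumerable.eqv ℚ) q, ?_⟩
  have : myQ ((Denumerable.eqv ℚ) q) = (q : ℝ) := by
    simp [myQ]
  rw [this]
  exact mem_ball_self (by positivity)

lemma volume_myU_le : volume myU ≤ 1/2 := by
  have h1 : volume myU ≤ ∑' n : ℕ, volume (ball (myQ n) ((1/8) * (1/2)^n)) :=
    measure_iUnion_le _
  have h2 : ∀ n : ℕ, volume (ball (myQ n) ((1/8) * (1/2)^n))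
      = ENNReal.ofReal (1/4) * ((1/2 : ℝ≥0∞))^n := by
    intro n
    rw [Real.volume_ball]
    rw [show (2 : ℝ) * ((1/8) * (1/2)^n) = (1/4) * (1/2)^n by ring]
    rw [ENNReal.ofReal_mul (by norm_num), ENNReal.ofReal_pow (by norm_num)]
    congr 2
    rw [ENNReal.ofReal_div_of_pos (by norm_num)]
    norm_num
  calc volume myU ≤ ∑' n : ℕ, volume (ball (myQ n) ((1/8) * (1/2)^n)) := h1
    _ = ∑' n : ℕ, ENNReal.ofReal (1/4) * ((1/2 : ℝ≥0∞))^n := by simp only [h2]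
    _ = ENNReal.ofReal (1/4) * (1 - 1/2)⁻¹ := by
        rw [ENNReal.tsum_mul_left, ENNReal.tsum_geometric]
    _ = 1/2 := by
        rw [ENNReal.ofReal_div_of_pos (by norm_num)]
        norm_num
        rw [show (4:ℝ≥0∞) = 2*2 by norm_num, ENNReal.mul_inv (by norm_num) (by norm_num),
          mul_assoc, ENNReal.inv_mul_cancel two_ne_zero ENNReal.ofNat_ne_top, mul_one]

lemma volume_myK_pos : 0 < volume myK := by
  have h : volume (Set.Icc (0:ℝ) 1) - volume myU ≤ volume myK := le_measure_diff
  have : (1 : ℝ≥0∞) - 1/2 ≤ volume myK := by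
    refine le_trans ?_ h
    rw [Real.volume_Icc, sub_zero, ENNReal.ofReal_one]
    exact tsub_le_tsub_left volume_myU_le 1
  refine lt_of_lt_of_le ?_ this
  rw [one_div, ENNReal.one_sub_inv_two]
  simp

theorem stmt10 :
    ∃ f : ℝ → ℝ, Differentiable ℝ f ∧ StrictMono f ∧
      0 < volume {x : ℝ | deriv f x = 0} := by
  set g : ℝ → ℝ := fun t => infDist t myK with hg_def
  have hg : Continuous g := continuous_infDist_pt myK
  set f : ℝ → ℝ := fun x => ∫ t in (0:ℝ)..x, g t with hf_def
  have hderiv : ∀ x, HasDerivAt f (g x) x := fun x =>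
    (hg.integral_hasStrictDerivAt 0 x).hasDerivAt
  have hdiff : Differentiable ℝ f := fun x => (hderiv x).differentiableAt
  have hderiv' : ∀ x, deriv f x = g x := fun x => (hderiv x).deriv
  have hKne : myK.Nonempty := nonempty_of_measure_ne_zero volume_myK_pos.ne'
  have hmono : Monotone f :=
    monotone_of_deriv_nonneg hdiff (fun x => by rw [hderiv' x]; exact infDist_nonneg)
  refine ⟨f, hdiff, ?_, ?_⟩
  · intro a b hab
    obtain ⟨q, hq1, hq2⟩ := exists_rat_btwn hab
    have hqU : (q : ℝ) ∈ myU := rat_mem_myU q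
    have hqK : (q : ℝ) ∉ myK := fun h => h.2 hqU
    have hqpos : 0 < g q := (isClosed_myK.notMem_iff_infDist_pos hKne).1 hqK
    have hopen : IsOpen ({t : ℝ | 0 < g t} ∩ Set.Ioo a b) :=
      (isOpen_lt continuous_const hg).inter isOpen_Ioo
    have hqmem : (q : ℝ) ∈ {t : ℝ | 0 < g t} ∩ Set.Ioo a b := ⟨hqpos, hq1, hq2⟩
    obtain ⟨ε, εpos, hball⟩ := Metric.isOpen_iff.1 hopen _ hqmem
    set c : ℝ := q - ε / 2
    set d : ℝ := q + ε / 2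
    have hcd : c < d := by simp only [c, d]; linarith
    have hIoo : Set.Icc c d ⊆ ball (q : ℝ) ε := by
      rw [Real.ball_eq_Ioo]
      intro x hx
      simp only [c, d, Set.mem_Icc] at hx
      constructor <;> linarith [hx.1, hx.2, εpos]
    have hc : c ∈ {t : ℝ | 0 < g t} ∩ Set.Ioo a b := hball (hIoo ⟨le_refl c, hcd.le⟩)
    have hd : d ∈ {t : ℝ | 0 < g t} ∩ Set.Ioo a b := hball (hIoo ⟨hcd.le, le_refl d⟩)
    have hfd : f c < f d := by
      have hsub : f d - f c = ∫ t in c..d, g t :=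
        intervalIntegral.integral_interval_sub_left
          (hg.intervalIntegrable 0 d) (hg.intervalIntegrable 0 c)
      have hpos : 0 < ∫ t in c..d, g t := by
        refine intervalIntegral.intervalIntegral_pos_of_pos_on
          (hg.intervalIntegrable c d) (fun x hx => ?_) hcd
        exact (hball (hIoo ⟨hx.1.le, hx.2.le⟩)).1
      linarith [hsub ▸ hpos]
    calc f a ≤ f c := hmono hc.2.1.le
      _ < f d := hfd
      _ ≤ f b := hmono hd.2.2.le
  · refine lt_of_lt_of_le volume_myK_pos (measure_mono ?_)
    intro x hx
    simp only [Set.mem_setOf_eq, hderiv' x]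
    exact infDist_zero_of_mem hx
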